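/- Let (X,d) be a metric space with |X| ≥ 3 and let T : X → X be a generalized Kannan type mapping with some λ ∈ [0, 2/3). Then T has at most two fixed points. -/
import Mathlib

theorem stmt_4 {X : Type*} [MetricSpace X] (h3 : 3 ≤ Cardinal.mk X) (T : X → X)
    (l : ℝ) (hl0 : 0 ≤ l) (hl : l < 2/3)
    (hGK : ∀ x y z : X, x ≠ y → y ≠ z → x ≠ z →
      dist (T x) (T y) + dist (T y) (T z) + dist (T x) (T z) ≤
        l * (dist x (T x) + dist y (T y) + dist z (T z))) :
    ∀ x y z : X, T x = x → T y = y → T z = z → x = y ∨ y = z ∨ x = z := by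
  intro x y z hx hy hz
  by_contra h
  push_neg at h
  obtain ⟨hxy, hyz, hxz⟩ := h
  have := hGK x y z hxy hyz hxz
  rw [hx, hy, hz] at this
  simp [dist_self] at this
  have h1 := dist_pos.mpr hxy
  have h2 := dist_pos.mpr hyz
  have h3' := dist_pos.mpr hxz
  linarith
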